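/- Let $\alpha \in (1/2, 1)$ and $\mu > 1$. For the function $\tilde u_{\alpha,\mu}$ on $\mathbb{R}^2$ given by $\tilde u(y) = \frac{1}{\alpha}\ln\frac{1+|y|^2}{\mu^2+|y|^2}$, one has $\frac{1}{4\pi}\int_{\mathbb{R}^2} e^{2\tilde u(y)}\frac{4}{(1+|y|^2)^2}\,dy = \frac{1-\mu^{2-4/\alpha}}{(\frac{2}{\alpha}-1)(\mu^2-1)}$. -/

import Mathlib

open MeasureTheory
open Real Set Filter Topology

/-- `ũ_{α,μ}(y) = (1/α) ln((1+|y|²)/(μ²+|y|²))` on `ℝ²`. -/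
noncomputable def uTilde (α μ : ℝ) (y : EuclideanSpace ℝ (Fin 2)) : ℝ :=
  (1 / α) * Real.log ((1 + ‖y‖ ^ 2) / (μ ^ 2 + ‖y‖ ^ 2))

/-- for `α ∈ (1/2,1)` and `μ > 1`,
`(1/4π) ∫_{ℝ²} e^{2ũ(y)} · 4/(1+|y|²)² dy = (1 - μ^{2-4/α})/((2/α - 1)(μ²-1))`. -/
theorem stmt9 (α μ : ℝ) (hα : α ∈ Set.Ioo (1/2 : ℝ) 1) (hμ : 1 < μ) :
    (1 / (4 * Real.pi)) * ∫ y : EuclideanSpace ℝ (Fin 2),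
        Real.exp (2 * uTilde α μ y) * (4 / (1 + ‖y‖ ^ 2) ^ 2) =
      (1 - μ ^ (2 - 4 / α)) / ((2 / α - 1) * (μ ^ 2 - 1)) := by
  simp only [uTilde]
  obtain ⟨hα1, hα2⟩ := hα
  have hα0 : 0 < α := by linarith
  set p : ℝ := 2 / α with hpdef
  have hp1 : 1 < p := by
    rw [hpdef, lt_div_iff₀ hα0]; linarith
  have hμ0 : 0 < μ := lt_trans one_pos hμ
  have hμ2 : (1:ℝ) < μ ^ 2 := by nlinarith
  have hqpos : ∀ r : ℝ, 0 < (1 + r^2) / (μ^2 + r^2) := by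
    intro r; apply div_pos <;> positivity
  set C : ℝ := 2 / ((p - 1) * (μ^2 - 1)) with hC
  set G : ℝ → ℝ := fun r => C * ((1 + r^2) / (μ^2 + r^2)) ^ (p - 1) with hG
  set f : ℝ → ℝ := fun r => ((1 + r^2) / (μ^2 + r^2)) ^ p * (4 / (1 + r^2)^2) with hf
  -- derivative computation
  have hderiv : ∀ r : ℝ, HasDerivAt G (r * f r) r := by
    intro r
    have e1 : (0:ℝ) < 1 + r^2 := by positivity
    have e2 : (0:ℝ) < μ^2 + r^2 := by positivity
    have h1 : HasDerivAt (fun r : ℝ => (1 + r^2) / (μ^2 + r^2))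
        ((2*r*(μ^2 + r^2) - (1 + r^2)*(2*r)) / (μ^2 + r^2)^2) r := by
      exact (((hasDerivAt_pow 2 r).const_add 1).div ((hasDerivAt_pow 2 r).const_add (μ^2))
        (by positivity)).congr_deriv (by ring_nf)
    have h2 := (h1.rpow_const (p := p - 1) (Or.inl (hqpos r).ne')).const_mul C
    refine h2.congr_deriv (Eq.symm ?_)
    show r * (((1 + r^2) / (μ^2 + r^2)) ^ p * (4 / (1 + r^2)^2)) = _
    rw [hC, div_rpow e1.le e2.le, div_rpow e1.le e2.le, Real.rpow_sub e1, Real.rpow_sub e1,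
        Real.rpow_sub e2, Real.rpow_sub e2, Real.rpow_one]
    have e3 : (0:ℝ) < (1+r^2)^p := Real.rpow_pos_of_pos e1 p
    have e4 : (0:ℝ) < (μ^2+r^2)^p := Real.rpow_pos_of_pos e2 p
    set X : ℝ := (1+r^2)^p with hX
    set Y : ℝ := (μ^2+r^2)^p with hY
    have hne1 : p - 1 ≠ 0 := by linarith
    have hne2 : μ^2 - 1 ≠ 0 := by nlinarith
    simp only [Real.rpow_one]
    field_simp
    ring
  -- limit of G at infinity
  have hlim : Tendsto G atTop (𝓝 C) := by
    have h1 : Tendsto (fun r : ℝ => (1 + r^2) / (μ^2 + r^2)) atTop (𝓝 1) := by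
      have : (fun r : ℝ => (1 + r^2) / (μ^2 + r^2))
          = fun r : ℝ => 1 - (μ^2 - 1) / (μ^2 + r^2) := by
        funext r
        have e2 : (0:ℝ) < μ^2 + r^2 := by positivity
        field_simp
        ring
      rw [this]
      have h2 : Tendsto (fun r : ℝ => (μ^2 - 1) / (μ^2 + r^2)) atTop (𝓝 0) := by
        apply Tendsto.div_atTop tendsto_const_nhds
        exact tendsto_atTop_add_const_left _ _ (tendsto_pow_atTop two_ne_zero)
      simpa using (tendsto_const_nhds (x := (1:ℝ)) (f := atTop)).sub h2
    have h3 := (h1.rpow_const (Or.inr (by linarith : (0:ℝ) ≤ p - 1))).const_mul C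
    simpa using h3
  -- the 1D integral
  have key : ∫ r in Ioi (0:ℝ), r * f r = C * (1 - μ ^ (2 - 2*p)) := by
    rw [integral_Ioi_of_hasDerivAt_of_nonneg ((hderiv 0).continuousAt.continuousWithinAt)
      (fun x _ => hderiv x) ?_ hlim]
    · have hq0 : (1 + (0:ℝ)^2) / (μ^2 + (0:ℝ)^2) = μ ^ (-2 : ℝ) := by
        rw [Real.rpow_neg hμ0.le, show (2:ℝ) = ((2:ℕ):ℝ) by norm_num, Real.rpow_natCast]
        norm_num
      have hG0 : G 0 = C * μ ^ (2 - 2*p) := by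
        rw [hG]
        simp only [hq0]
        rw [← Real.rpow_mul hμ0.le, show (-2:ℝ) * (p-1) = 2 - 2*p by ring]
      rw [hG0]; ring
    · intro x hx
      have h1 : 0 < f x := by
        apply mul_pos (Real.rpow_pos_of_pos (hqpos x) p); positivity
      exact (mul_pos (mem_Ioi.mp hx) h1).le
  -- volume of the unit ball in ℝ²
  have hvol : (volume (Metric.ball (0 : EuclideanSpace ℝ (Fin 2)) 1)).toReal = Real.pi := by
    rw [EuclideanSpace.volume_ball]
    norm_num [Real.sq_sqrt Real.pi_pos.le, Real.Gamma_two, ENNReal.toReal_ofReal Real.pi_pos.le]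
  -- rewrite the integrand
  have hfun : (fun y : EuclideanSpace ℝ (Fin 2) =>
      Real.exp (2 * ((1 / α) * Real.log ((1 + ‖y‖ ^ 2) / (μ ^ 2 + ‖y‖ ^ 2))))
        * (4 / (1 + ‖y‖ ^ 2) ^ 2)) = fun y => f ‖y‖ := by
    funext y
    rw [hf]
    show _ = ((1 + ‖y‖^2) / (μ^2 + ‖y‖^2)) ^ p * (4 / (1 + ‖y‖^2)^2)
    rw [Real.rpow_def_of_pos (hqpos ‖y‖), hpdef]
    congr 2
    ring
  have hI : ∫ y : EuclideanSpace ℝ (Fin 2),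
      Real.exp (2 * ((1 / α) * Real.log ((1 + ‖y‖ ^ 2) / (μ ^ 2 + ‖y‖ ^ 2))))
        * (4 / (1 + ‖y‖ ^ 2) ^ 2)
      = 2 * (Real.pi * (C * (1 - μ ^ (2 - 2*p)))) := by
    rw [hfun, MeasureTheory.integral_fun_norm_addHaar (volume : Measure (EuclideanSpace ℝ (Fin 2))) f]
    simp only [finrank_euclideanSpace_fin, smul_eq_mul, nsmul_eq_mul, pow_one, Nat.cast_ofNat]
    norm_num [measureReal_def, hvol, key, Real.pi_pos.le]
  rw [hI, show (2:ℝ) - 2*p = 2 - 4/α by rw [hpdef]; ring, hC]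
  have hne1 : p - 1 ≠ 0 := by linarith
  have hne2 : μ^2 - 1 ≠ 0 := by nlinarith
  have hπ : Real.pi ≠ 0 := Real.pi_ne_zero
  rw [hpdef] at hne1 ⊢
  set M := μ ^ ((2:ℝ) - 4/α) with hM
  set D := (2/α - 1) * (μ^2 - 1) with hD
  have hD0 : D ≠ 0 := mul_ne_zero hne1 hne2
  field_simp
  ring
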